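/- Let f : Θ → ℝ be L-Lipschitz and ℓ-weakly convex (i.e., θ ↦ f(θ) + (ℓ/2)‖θ‖² is convex) on a convex set Θ ⊆ ℝ^d, and define the Moreau envelope f_λ(θ) = min_{θ'} { f(θ') + (1/(2λ))‖θ − θ'‖² } with λ = 1/(2ℓ). If ‖∇f_λ(θ̄)‖ ≤ ε, then the proximal point θ* = argmin_{θ'} { f(θ') + ℓ‖θ̄ − θ'‖² } satisfies ‖θ̄ − θ*‖ ≤ ε/(2ℓ) and there exists a subgradient h ∈ ∂f(θ*) with ‖h‖ ≤ ε. -/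

import Mathlib

open scoped RealInnerProductSpace
open InnerProductSpace

set_option maxHeartbeats 1000000

theorem grad_quad' {d : ℕ} (θbar θstar : EuclideanSpace ℝ (Fin d)) (c ℓ : ℝ) :
    HasGradientAt (fun θ => c + ℓ * ‖θ - θstar‖ ^ 2) ((2 * ℓ) • (θbar - θstar)) θbar := by
  rw [hasGradientAt_iff_hasFDerivAt]
  have h1 : HasFDerivAt (fun θ : EuclideanSpace ℝ (Fin d) => θ - θstar)
      (ContinuousLinearMap.id ℝ _) θbar := (hasFDerivAt_id θbar).sub_const θstar
  have h2 := h1.inner ℝ h1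
  have h3 : (fun θ : EuclideanSpace ℝ (Fin d) => c + ℓ * ‖θ - θstar‖ ^ 2)
      = fun θ => c + ℓ * ⟪θ - θstar, θ - θstar⟫ := by
    funext θ; rw [real_inner_self_eq_norm_sq]
  rw [h3]
  have h4 := (h2.const_mul ℓ).const_add c
  convert h4 using 1
  · rfl
  · rfl
  ext v
  rw [ContinuousLinearMap.smul_apply, ContinuousLinearMap.comp_apply, fderivInnerCLM_apply]
  simp only [ContinuousLinearMap.prod_apply, ContinuousLinearMap.id_apply, toDual_apply_apply,
    smul_eq_mul]
  rw [real_inner_smul_left, real_inner_comm v]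
  ring

/-- Lin–Jin–Jordan style lemma. If `f` is `L`-Lipschitz and `ℓ`-weakly
convex on a closed convex set `Θs`, `fM` is its Moreau envelope with parameter
`λ = 1/(2ℓ)`, `θstar` is the proximal point at `θbar`, and the gradient of `fM` at
`θbar` has norm at most `ε`, then `‖θbar - θstar‖ ≤ ε/(2ℓ)` and there is a subgradient
`h` of the `ℓ`-weakly convex `f` at `θstar` with `‖h‖ ≤ ε`. -/
theorem stmt_6 {d : ℕ} (Θs : Set (EuclideanSpace ℝ (Fin d)))
    (hΘconv : Convex ℝ Θs) (hΘcl : IsClosed Θs) (hΘne : Θs.Nonempty)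
    (f : EuclideanSpace ℝ (Fin d) → ℝ) (L ℓ ε : ℝ) (hℓ : 0 < ℓ) (hε : 0 ≤ ε)
    (hLip : LipschitzOnWith (Real.toNNReal L) f Θs)
    (hwc : ConvexOn ℝ Θs (fun θ => f θ + (ℓ / 2) * ‖θ‖ ^ 2))
    (fM : EuclideanSpace ℝ (Fin d) → ℝ)
    (hfM : ∀ θ, fM θ = sInf ((fun θ' => f θ' + ℓ * ‖θ - θ'‖ ^ 2) '' Θs))
    (θbar θstar : EuclideanSpace ℝ (Fin d)) (hθbar : θbar ∈ Θs) (hθstar : θstar ∈ Θs)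
    (hprox : IsLeast ((fun θ' => f θ' + ℓ * ‖θbar - θ'‖ ^ 2) '' Θs)
      (f θstar + ℓ * ‖θbar - θstar‖ ^ 2))
    (g : EuclideanSpace ℝ (Fin d)) (hgrad : HasGradientAt fM g θbar) (hg : ‖g‖ ≤ ε) :
    ‖θbar - θstar‖ ≤ ε / (2 * ℓ) ∧
      ∃ h : EuclideanSpace ℝ (Fin d),
        (∀ y ∈ Θs, f θstar + ⟪h, y - θstar⟫ - (ℓ / 2) * ‖y - θstar‖ ^ 2 ≤ f y) ∧
        ‖h‖ ≤ ε := by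
  have hK : (0:ℝ) ≤ (Real.toNNReal L : ℝ) := (Real.toNNReal L).2
  -- boundedness below of the Moreau objective
  have hbdd : ∀ θ : EuclideanSpace ℝ (Fin d),
      BddBelow ((fun θ' => f θ' + ℓ * ‖θ - θ'‖ ^ 2) '' Θs) := by
    intro θ
    set K : ℝ := (Real.toNNReal L : ℝ)
    refine ⟨f θbar - K * ‖θ - θbar‖ - K ^ 2 / (4 * ℓ), ?_⟩
    rintro _ ⟨θ', hθ', rfl⟩
    show f θbar - K * ‖θ - θbar‖ - K ^ 2 / (4 * ℓ) ≤ f θ' + ℓ * ‖θ - θ'‖ ^ 2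
    have hlip : ‖f θ' - f θbar‖ ≤ K * dist θ' θbar := by
      have := hLip.dist_le_mul θ' hθ' θbar hθbar
      rwa [Real.dist_eq, ← Real.norm_eq_abs] at this
    have h1 : f θbar - f θ' ≤ K * ‖θ' - θbar‖ := by
      rw [Real.norm_eq_abs] at hlip
      rw [dist_eq_norm] at hlip
      linarith [(abs_le.mp hlip).1]
    have h2 : ‖θ' - θbar‖ ≤ ‖θ - θ'‖ + ‖θ - θbar‖ := by
      have h3 := norm_sub_le (θ' - θ) (θbar - θ)
      simp only [sub_sub_sub_cancel_right] at h3
      calc ‖θ' - θbar‖ ≤ ‖θ' - θ‖ + ‖θbar - θ‖ := h3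
        _ = ‖θ - θ'‖ + ‖θ - θbar‖ := by rw [norm_sub_rev θ', norm_sub_rev θbar]
    have key : K * ‖θ - θ'‖ - ℓ * ‖θ - θ'‖ ^ 2 ≤ K ^ 2 / (4 * ℓ) := by
      rw [le_div_iff₀ (by linarith : (0:ℝ) < 4 * ℓ)]
      nlinarith [sq_nonneg (2 * ℓ * ‖θ - θ'‖ - K)]
    nlinarith [h1, h2, key, hK, norm_nonneg (θ - θ'), norm_nonneg (θ - θbar)]
  have heq : fM θbar = f θstar + ℓ * ‖θbar - θstar‖ ^ 2 := (hfM θbar).trans hprox.csInf_eq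
  have hle : ∀ θ, fM θ ≤ f θstar + ℓ * ‖θ - θstar‖ ^ 2 := by
    intro θ
    rw [hfM θ]
    exact csInf_le (hbdd θ) ⟨θstar, hθstar, rfl⟩
  -- identify g
  have hQ := grad_quad' θbar θstar (f θstar) ℓ
  have hD := hQ.hasFDerivAt.sub hgrad.hasFDerivAt
  have hmin : IsLocalMin (fun θ => (f θstar + ℓ * ‖θ - θstar‖ ^ 2) - fM θ) θbar := by
    apply Filter.Eventually.of_forall
    intro θ
    simp only
    linarith [hle θ, heq.ge]
  have hzero := hmin.hasFDerivAt_eq_zero hD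
  have hgeq : g = (2 * ℓ) • (θbar - θstar) := by
    have h0 : (toDual ℝ (EuclideanSpace ℝ (Fin d))) ((2 * ℓ) • (θbar - θstar) - g) = 0 := by
      rw [map_sub]; exact hzero
    exact (sub_eq_zero.mp ((toDual ℝ (EuclideanSpace ℝ (Fin d))).map_eq_zero_iff.mp h0)).symm
  have hnorm : ‖g‖ = 2 * ℓ * ‖θbar - θstar‖ := by
    rw [hgeq, norm_smul, Real.norm_eq_abs, abs_of_pos (by linarith)]
  constructor
  · rw [le_div_iff₀ (by linarith : (0:ℝ) < 2 * ℓ)]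
    calc ‖θbar - θstar‖ * (2 * ℓ) = ‖g‖ := by rw [hnorm]; ring
      _ ≤ ε := hg
  · refine ⟨g, ?_, hg⟩
    intro y hy
    have hC : (0:ℝ) ≤ (ℓ / 2) * ‖y - θstar‖ ^ 2 := by positivity
    have e3 : ⟪g, y - θstar⟫ = 2 * ℓ * ⟪θbar - θstar, y - θstar⟫ := by
      rw [hgeq, real_inner_smul_left]
    have hkey : ∀ t : ℝ, 0 < t → t ≤ 1 →
        (f θstar + (ℓ / 2) * ‖θstar‖ ^ 2) - (f y + (ℓ / 2) * ‖y‖ ^ 2)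
          + ℓ * ⟪θstar, y - θstar⟫ + 2 * ℓ * ⟪θbar - θstar, y - θstar⟫
          ≤ t * ((ℓ / 2) * ‖y - θstar‖ ^ 2) := by
      intro t ht ht1
      have hz : (1 - t) • θstar + t • y ∈ Θs :=
        hΘconv hθstar hy (by linarith) (le_of_lt ht) (by ring)
      have hzeq : (1 - t) • θstar + t • y = θstar + t • (y - θstar) := by module
      have hFz : f θstar + ℓ * ‖θbar - θstar‖ ^ 2
          ≤ f (θstar + t • (y - θstar)) + ℓ * ‖θbar - (θstar + t • (y - θstar))‖ ^ 2 := by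
        have := hprox.2 ⟨(1 - t) • θstar + t • y, hz, rfl⟩
        rwa [hzeq] at this
      have hconv : f (θstar + t • (y - θstar)) + (ℓ / 2) * ‖θstar + t • (y - θstar)‖ ^ 2
          ≤ (1 - t) * (f θstar + (ℓ / 2) * ‖θstar‖ ^ 2) + t * (f y + (ℓ / 2) * ‖y‖ ^ 2) := by
        have := hwc.2 hθstar hy (by linarith : (0:ℝ) ≤ 1 - t) (le_of_lt ht) (by ring)
        simp only [smul_eq_mul] at this
        rwa [hzeq] at this
      have e1 : ‖θbar - (θstar + t • (y - θstar))‖ ^ 2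
          = ‖θbar - θstar‖ ^ 2 - 2 * t * ⟪θbar - θstar, y - θstar⟫
            + t ^ 2 * ‖y - θstar‖ ^ 2 := by
        have h : θbar - (θstar + t • (y - θstar)) = (θbar - θstar) - t • (y - θstar) := by module
        rw [h, norm_sub_sq_real, real_inner_smul_right, norm_smul, Real.norm_eq_abs, mul_pow,
          sq_abs]
        ring
      have e2 : ‖θstar + t • (y - θstar)‖ ^ 2
          = ‖θstar‖ ^ 2 + 2 * t * ⟪θstar, y - θstar⟫ + t ^ 2 * ‖y - θstar‖ ^ 2 := by
        rw [norm_add_sq_real, real_inner_smul_right, norm_smul, Real.norm_eq_abs, mul_pow,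
          sq_abs]
        ring
      rw [e1] at hFz
      rw [e2] at hconv
      have h5 : t * ((f θstar + (ℓ / 2) * ‖θstar‖ ^ 2) - (f y + (ℓ / 2) * ‖y‖ ^ 2)
          + ℓ * ⟪θstar, y - θstar⟫ + 2 * ℓ * ⟪θbar - θstar, y - θstar⟫)
          ≤ t * (t * ((ℓ / 2) * ‖y - θstar‖ ^ 2)) := by linarith [hFz, hconv]
      exact le_of_mul_le_mul_left h5 ht
    have hA : (f θstar + (ℓ / 2) * ‖θstar‖ ^ 2) - (f y + (ℓ / 2) * ‖y‖ ^ 2)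
        + ℓ * ⟪θstar, y - θstar⟫ + 2 * ℓ * ⟪θbar - θstar, y - θstar⟫ ≤ 0 := by
      by_contra hA0
      push_neg at hA0
      set A : ℝ := (f θstar + (ℓ / 2) * ‖θstar‖ ^ 2) - (f y + (ℓ / 2) * ‖y‖ ^ 2)
          + ℓ * ⟪θstar, y - θstar⟫ + 2 * ℓ * ⟪θbar - θstar, y - θstar⟫ with hAdef
      set C : ℝ := (ℓ / 2) * ‖y - θstar‖ ^ 2 with hCdef
      have hden : (0:ℝ) < 2 * C + 2 := by linarith
      have ht : 0 < min 1 (A / (2 * C + 2)) := lt_min one_pos (div_pos hA0 hden)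
      have ht1 : min 1 (A / (2 * C + 2)) ≤ 1 := min_le_left _ _
      have ht3 : min 1 (A / (2 * C + 2)) * (2 * C + 2) ≤ A := by
        rw [← le_div_iff₀ hden]; exact min_le_right _ _
      have := hkey _ ht ht1
      linarith [this, ht3, mul_nonneg ht.le hC, ht]
    have e4 : ⟪θstar, y - θstar⟫ = ⟪y, θstar⟫ - ‖θstar‖ ^ 2 := by
      rw [inner_sub_right, real_inner_self_eq_norm_sq, real_inner_comm]
    have e5 : ‖y - θstar‖ ^ 2 = ‖y‖ ^ 2 - 2 * ⟪y, θstar⟫ + ‖θstar‖ ^ 2 := norm_sub_sq_real y θstar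
    have e5' : (ℓ / 2) * ‖y - θstar‖ ^ 2
        = (ℓ / 2) * ‖y‖ ^ 2 - ℓ * ⟪y, θstar⟫ + (ℓ / 2) * ‖θstar‖ ^ 2 := by rw [e5]; ring
    rw [e4] at hA
    rw [e3]
    linarith [hA, e5']
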